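/- arXiv:2302.13588 — 2 statements merged into one kernel-verified Lean document; each statement's English description precedes it below -/
import Mathlib

section
/- Equip P = k[x₁,x₂,x₃] with the Poisson bracket {x₁,x₂} = 0, {x₂,x₃} = 2x₁x₂ + x₂², {x₃,x₁} = x₁² + 2x₁x₂. Fix a, b ∈ k and let φ₁, φ₂ be the graded Poisson automorphisms with φ₁(x₁) = −x₂, φ₁(x₂) = −x₁, φ₁(x₃) = a·x₁ + a·x₂ + x₃, and φ₂(x₁) = −x₁, φ₂(x₂) = x₁ + x₂, φ₂(x₃) = b·x₁ + x₃. Then the group G = ⟨φ₁,φ₂⟩ satisfies φ₁² = φ₂² = (φ₁φ₂)³ = id and φ₁φ₂ ≠ φ₂φ₁, so G is isomorphic to the symmetric group S₃; moreover the invariant subalgebra P^G equals the k-subalgebra generated by y₁ = ((a+b)/3)x₁ + ((2a−b)/3)x₂ + x₃, y₂ = x₁² + x₂² + x₁x₂, y₃ = 2x₁³ + 3x₁²x₂ − 3x₁x₂² − 2x₂³, and these generators satisfy {y₁,y₂} = y₃, {y₂,y₃} = 0, {y₃,y₁} = −6y₂². -/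
open MvPolynomial

/-- The bracket on `k[x₁,x₂,x₃]` determined by the values `p12 = {x₁,x₂}`, `p23 = {x₂,x₃}`,
`p31 = {x₃,x₁}` via `{f,g} = Σ_{i<j} (∂f/∂xᵢ·∂g/∂xⱼ − ∂f/∂xⱼ·∂g/∂xᵢ)·{xᵢ,xⱼ}`. -/
noncomputable def jacBracket {k : Type*} [Field k] (p12 p23 p31 : MvPolynomial (Fin 3) k)
    (f g : MvPolynomial (Fin 3) k) : MvPolynomial (Fin 3) k :=
  (pderiv 0 f * pderiv 1 g - pderiv 1 f * pderiv 0 g) * p12 +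
    (pderiv 1 f * pderiv 2 g - pderiv 2 f * pderiv 1 g) * p23 +
    (pderiv 2 f * pderiv 0 g - pderiv 0 f * pderiv 2 g) * p31

/-- The bracket `{x₁,x₂} = 0`, `{x₂,x₃} = 2x₁x₂ + x₂²`, `{x₃,x₁} = x₁² + 2x₁x₂`. -/
noncomputable def br18 {k : Type*} [Field k] :
    MvPolynomial (Fin 3) k → MvPolynomial (Fin 3) k → MvPolynomial (Fin 3) k :=
  jacBracket 0 (2 * X 0 * X 1 + X 1 ^ 2) (X 0 ^ 2 + 2 * X 0 * X 1)

noncomputable def y18_1 {k : Type*} [Field k] (a b : k) : MvPolynomial (Fin 3) k :=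
  C ((a + b) / 3) * X 0 + C ((2 * a - b) / 3) * X 1 + X 2

noncomputable def y18_2 {k : Type*} [Field k] : MvPolynomial (Fin 3) k :=
  X 0 ^ 2 + X 1 ^ 2 + X 0 * X 1

noncomputable def y18_3 {k : Type*} [Field k] : MvPolynomial (Fin 3) k :=
  2 * X 0 ^ 3 + 3 * X 0 ^ 2 * X 1 - 3 * X 0 * X 1 ^ 2 - 2 * X 1 ^ 3

section Aux

variable {k : Type*} [Field k] [CharZero k]

lemma pderiv_ofNat18 (i : Fin 3) (n : ℕ) [n.AtLeastTwo] :
    pderiv i (no_index (OfNat.ofNat n) : MvPolynomial (Fin 3) k) = 0 := by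
  rw [← map_ofNat (C : k →+* MvPolynomial (Fin 3) k) n]; exact pderiv_C

lemma algEquiv_ext18 {e₁ e₂ : MvPolynomial (Fin 3) k ≃ₐ[k] MvPolynomial (Fin 3) k}
    (h : ∀ i, e₁ (X i) = e₂ (X i)) : e₁ = e₂ :=
  AlgEquiv.coe_algHom_injective (algHom_ext h)

lemma algEquiv_C18 (e : MvPolynomial (Fin 3) k ≃ₐ[k] MvPolynomial (Fin 3) k) (c : k) :
    e (C c) = C c := by
  rw [← algebraMap_eq]; exact e.commutes c

/-- shift automorphism -/
noncomputable def Se18 (c1 c2 : k) : MvPolynomial (Fin 3) k ≃ₐ[k] MvPolynomial (Fin 3) k :=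
  AlgEquiv.ofAlgHom
    (aeval ![X 0, X 1, C c1 * X 0 + C c2 * X 1 + X 2])
    (aeval ![X 0, X 1, X 2 - C c1 * X 0 - C c2 * X 1])
    (by apply algHom_ext; intro i; fin_cases i <;> simp <;> ring)
    (by apply algHom_ext; intro i; fin_cases i <;> simp <;> ring)

lemma Se18_apply (c1 c2 : k) (p : MvPolynomial (Fin 3) k) :
    Se18 c1 c2 p = aeval ![X 0, X 1, C c1 * X 0 + C c2 * X 1 + X 2] p := rfl

lemma Se18_symm_apply (c1 c2 : k) (p : MvPolynomial (Fin 3) k) :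
    (Se18 c1 c2).symm p = aeval ![X 0, X 1, X 2 - C c1 * X 0 - C c2 * X 1] p := rfl

lemma C3_cancel : ((3 : MvPolynomial (Fin 3) k)) * C (3 : k)⁻¹ = 1 := by
  rw [← map_ofNat (C : k →+* MvPolynomial (Fin 3) k) 3, ← C_mul]
  norm_num

/-- the linear change of variables x₀ ↦ u − v, x₁ ↦ v − w, x₂ ↦ u + v + w -/
noncomputable def Ie18 : MvPolynomial (Fin 3) k ≃ₐ[k] MvPolynomial (Fin 3) k :=
  AlgEquiv.ofAlgHom
    (aeval ![X 0 - X 1, X 1 - X 2, X 0 + X 1 + X 2])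
    (aeval ![C (3:k)⁻¹ * (X 0 + X 0 + X 1 + X 2), C (3:k)⁻¹ * (- X 0 + X 1 + X 2),
      C (3:k)⁻¹ * (- X 0 - X 1 - X 1 + X 2)])
    (by
      apply algHom_ext; intro i; fin_cases i <;> simp <;>
        [ linear_combination (X (0 : Fin 3) : MvPolynomial (Fin 3) k) * C3_cancel (k := k);
          linear_combination (X (1 : Fin 3) : MvPolynomial (Fin 3) k) * C3_cancel (k := k);
          linear_combination (X (2 : Fin 3) : MvPolynomial (Fin 3) k) * C3_cancel (k := k)])
    (by
      apply algHom_ext; intro i; fin_cases i <;> simp <;>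
        [ linear_combination (X (0 : Fin 3) : MvPolynomial (Fin 3) k) * C3_cancel (k := k);
          linear_combination (X (1 : Fin 3) : MvPolynomial (Fin 3) k) * C3_cancel (k := k);
          linear_combination (X (2 : Fin 3) : MvPolynomial (Fin 3) k) * C3_cancel (k := k)])

lemma Ie18_apply (p : MvPolynomial (Fin 3) k) :
    Ie18 p = aeval ![X 0 - X 1, X 1 - X 2, X 0 + X 1 + X 2] p := rfl

/-- rename as a monoid hom into the automorphism group -/
noncomputable def RH18 (k : Type*) [Field k] :
    Equiv.Perm (Fin 3) →* (MvPolynomial (Fin 3) k ≃ₐ[k] MvPolynomial (Fin 3) k) :=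
  MonoidHom.mk' (fun s => renameEquiv k s) (by
    intro σ τ
    apply AlgEquiv.coe_algHom_injective
    apply algHom_ext
    intro i
    simp [AlgEquiv.mul_apply])

lemma RH18_apply (s : Equiv.Perm (Fin 3)) (p : MvPolynomial (Fin 3) k) :
    RH18 k s p = rename s p := rfl

lemma RH18_injective : Function.Injective (RH18 (k := k)) := by
  intro σ τ h
  ext i
  have := congrArg (fun e : MvPolynomial (Fin 3) k ≃ₐ[k] MvPolynomial (Fin 3) k => e (X i)) h
  simp only [RH18_apply, rename_X] at this
  exact congrArg Fin.val (X_injective (R := k) this)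

lemma esymm18_1 : esymm (Fin 3) k 1 = X 0 + X 1 + X 2 := by
  rw [esymm]
  rw [show Finset.powersetCard 1 (Finset.univ : Finset (Fin 3)) = {{0},{1},{2}} from by decide]
  rw [Finset.sum_insert (by decide), Finset.sum_insert (by decide), Finset.sum_singleton]
  simp [add_assoc]

lemma esymm18_2 : esymm (Fin 3) k 2 = X 0 * X 1 + X 0 * X 2 + X 1 * X 2 := by
  rw [esymm]
  rw [show Finset.powersetCard 2 (Finset.univ : Finset (Fin 3)) = {{0,1},{0,2},{1,2}} from by decide]
  rw [Finset.sum_insert (by decide), Finset.sum_insert (by decide), Finset.sum_singleton]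
  rw [show ({0,1} : Finset (Fin 3)) = insert 0 {1} from rfl, Finset.prod_insert (by decide),
    Finset.prod_singleton]
  rw [show ({0,2} : Finset (Fin 3)) = insert 0 {2} from rfl, Finset.prod_insert (by decide),
    Finset.prod_singleton]
  rw [show ({1,2} : Finset (Fin 3)) = insert 1 {2} from rfl, Finset.prod_insert (by decide),
    Finset.prod_singleton]
  ring

lemma esymm18_3 : esymm (Fin 3) k 3 = X 0 * X 1 * X 2 := by
  rw [esymm]
  rw [show Finset.powersetCard 3 (Finset.univ : Finset (Fin 3)) = {{0,1,2}} from by decide]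
  rw [Finset.sum_singleton]
  rw [show ({0,1,2} : Finset (Fin 3)) = insert 0 (insert 1 {2}) from rfl,
    Finset.prod_insert (by decide), Finset.prod_insert (by decide), Finset.prod_singleton,
    mul_assoc]

lemma perm3_gen : Subgroup.closure
    ({Equiv.swap 0 2, Equiv.swap 0 1} : Set (Equiv.Perm (Fin 3))) = ⊤ := by
  rw [eq_top_iff]
  intro g hg
  clear hg
  have h1 : Equiv.swap 0 2 ∈ Subgroup.closure
      ({Equiv.swap 0 2, Equiv.swap 0 1} : Set (Equiv.Perm (Fin 3))) :=
    Subgroup.subset_closure (by simp)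
  have h2 : Equiv.swap 0 1 ∈ Subgroup.closure
      ({Equiv.swap 0 2, Equiv.swap 0 1} : Set (Equiv.Perm (Fin 3))) :=
    Subgroup.subset_closure (by simp)
  have h : g = 1 ∨ g = Equiv.swap 0 2 ∨ g = Equiv.swap 0 1 ∨
      g = Equiv.swap 0 2 * Equiv.swap 0 1 ∨ g = Equiv.swap 0 1 * Equiv.swap 0 2 ∨
      g = Equiv.swap 0 2 * Equiv.swap 0 1 * Equiv.swap 0 2 := by revert g; decide
  rcases h with h|h|h|h|h|h <;> subst h
  · exact Subgroup.one_mem _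
  · exact h1
  · exact h2
  · exact Subgroup.mul_mem _ h1 h2
  · exact Subgroup.mul_mem _ h2 h1
  · exact Subgroup.mul_mem _ (Subgroup.mul_mem _ h1 h2) h1

end Aux

set_option maxHeartbeats 1000000 in
/-- For the graded Poisson automorphisms `φ₁ : x₁ ↦ −x₂, x₂ ↦ −x₁, x₃ ↦ ax₁ + ax₂ + x₃` and
`φ₂ : x₁ ↦ −x₁, x₂ ↦ x₁ + x₂, x₃ ↦ bx₁ + x₃`, the group `G = ⟨φ₁,φ₂⟩` satisfies
`φ₁² = φ₂² = (φ₁φ₂)³ = 1`, `φ₁φ₂ ≠ φ₂φ₁`, is isomorphic to `S₃`, and the invariant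
subalgebra `P^G` is generated by `y₁, y₂, y₃` with `{y₁,y₂} = y₃`, `{y₂,y₃} = 0`,
`{y₃,y₁} = −6y₂²`. -/
theorem stmt_18 {k : Type*} [Field k] [IsAlgClosed k] [CharZero k] (a b : k)
    (φ₁ φ₂ : MvPolynomial (Fin 3) k ≃ₐ[k] MvPolynomial (Fin 3) k)
    (hφ₁0 : φ₁ (X 0) = -X 1) (hφ₁1 : φ₁ (X 1) = -X 0)
    (hφ₁2 : φ₁ (X 2) = C a * X 0 + C a * X 1 + X 2)
    (hφ₂0 : φ₂ (X 0) = -X 0) (hφ₂1 : φ₂ (X 1) = X 0 + X 1)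
    (hφ₂2 : φ₂ (X 2) = C b * X 0 + X 2)
    (hbr₁ : ∀ f g, φ₁ (br18 f g) = br18 (φ₁ f) (φ₁ g))
    (hbr₂ : ∀ f g, φ₂ (br18 f g) = br18 (φ₂ f) (φ₂ g)) :
    φ₁ ^ 2 = 1 ∧ φ₂ ^ 2 = 1 ∧ (φ₁ * φ₂) ^ 3 = 1 ∧ φ₁ * φ₂ ≠ φ₂ * φ₁ ∧
    Nonempty ((Subgroup.closure {φ₁, φ₂} :
        Subgroup (MvPolynomial (Fin 3) k ≃ₐ[k] MvPolynomial (Fin 3) k)) ≃*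
      Equiv.Perm (Fin 3)) ∧
    {f : MvPolynomial (Fin 3) k | ∀ ψ ∈ Subgroup.closure {φ₁, φ₂}, ψ f = f} =
      ↑(Algebra.adjoin k ({y18_1 a b, y18_2, y18_3} : Set (MvPolynomial (Fin 3) k))) ∧
    br18 (y18_1 a b) y18_2 = y18_3 ∧
    br18 (y18_2 : MvPolynomial (Fin 3) k) y18_3 = 0 ∧
    br18 y18_3 (y18_1 a b) = -6 * y18_2 ^ 2 := by
  classical
  have hCa : (C a : MvPolynomial (Fin 3) k) = C ((a + b) / 3) + C ((2 * a - b) / 3) := by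
    rw [← C_add]; congr 1; ring
  have hCb : (C b : MvPolynomial (Fin 3) k)
      = 2 * C ((a + b) / 3) - C ((2 * a - b) / 3) := by
    rw [← map_ofNat (C : k →+* MvPolynomial (Fin 3) k) 2, ← C_mul, ← C_sub]; congr 1; ring
  set u : MvPolynomial (Fin 3) k ≃ₐ[k] MvPolynomial (Fin 3) k :=
    (Se18 ((a + b) / 3) ((2 * a - b) / 3)).symm.trans Ie18 with hu
  -- intertwining relations
  have key₁ : RH18 k (Equiv.swap 0 2) * u = u * φ₁ := by
    apply algEquiv_ext18; intro i
    fin_cases i <;>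
      simp only [Fin.zero_eta, Fin.mk_one, show ((⟨2, by norm_num⟩ : Fin 3)) = 2 from rfl, hu, AlgEquiv.mul_apply, AlgEquiv.trans_apply, RH18_apply, Se18_symm_apply,
        Ie18_apply, hφ₁0, hφ₁1, hφ₁2, map_add, map_sub, map_mul, map_neg, aeval_X, rename_X,
        algEquiv_C18, aeval_C, algebraMap_eq, Matrix.cons_val_zero, Matrix.cons_val_one,
        Matrix.head_cons, Matrix.cons_val_two, Matrix.tail_cons, rename_C,
        Equiv.swap_apply_left, Equiv.swap_apply_right,
        show (Equiv.swap (0:Fin 3) 2) 1 = 1 from by decide, hCa] <;> ring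
  have key₂ : RH18 k (Equiv.swap 0 1) * u = u * φ₂ := by
    apply algEquiv_ext18; intro i
    fin_cases i <;>
      simp only [Fin.zero_eta, Fin.mk_one, show ((⟨2, by norm_num⟩ : Fin 3)) = 2 from rfl, hu, AlgEquiv.mul_apply, AlgEquiv.trans_apply, RH18_apply, Se18_symm_apply,
        Ie18_apply, hφ₂0, hφ₂1, hφ₂2, map_add, map_sub, map_mul, map_neg, aeval_X, rename_X,
        algEquiv_C18, aeval_C, algebraMap_eq, Matrix.cons_val_zero, Matrix.cons_val_one,
        Matrix.head_cons, Matrix.cons_val_two, Matrix.tail_cons, rename_C,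
        Equiv.swap_apply_left, Equiv.swap_apply_right,
        show (Equiv.swap (0:Fin 3) 1) 2 = 2 from by decide, map_ofNat, hCb] <;> ring
  set θ : Equiv.Perm (Fin 3) →* (MvPolynomial (Fin 3) k ≃ₐ[k] MvPolynomial (Fin 3) k) :=
    ((MulAut.conj u⁻¹).toMonoidHom).comp (RH18 k) with hθ
  have hθ_apply : ∀ s, θ s = u⁻¹ * RH18 k s * u := by
    intro s
    simp [hθ, MulAut.conj_apply]
  have hθ₁ : θ (Equiv.swap 0 2) = φ₁ := by
    rw [hθ_apply, mul_assoc, key₁, ← mul_assoc, inv_mul_cancel, one_mul]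
  have hθ₂ : θ (Equiv.swap 0 1) = φ₂ := by
    rw [hθ_apply, mul_assoc, key₂, ← mul_assoc, inv_mul_cancel, one_mul]
  have hθinj : Function.Injective θ := by
    rw [hθ]
    rw [MonoidHom.coe_comp]
    exact ((MulAut.conj u⁻¹).injective).comp RH18_injective
  -- group relations
  have hg1 : φ₁ ^ 2 = 1 := by
    rw [← hθ₁, ← map_pow, show (Equiv.swap (0:Fin 3) 2) ^ 2 = 1 from by decide, map_one]
  have hg2 : φ₂ ^ 2 = 1 := by
    rw [← hθ₂, ← map_pow, show (Equiv.swap (0:Fin 3) 1) ^ 2 = 1 from by decide, map_one]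
  have hg3 : (φ₁ * φ₂) ^ 3 = 1 := by
    rw [← hθ₁, ← hθ₂, ← map_mul, ← map_pow,
      show (Equiv.swap (0:Fin 3) 2 * Equiv.swap 0 1) ^ 3 = 1 from by decide, map_one]
  have hg4 : φ₁ * φ₂ ≠ φ₂ * φ₁ := by
    intro hEq
    rw [← hθ₁, ← hθ₂, ← map_mul, ← map_mul] at hEq
    have := hθinj hEq
    exact absurd this (by decide)
  -- the isomorphism with S₃
  have hclosure : Subgroup.closure ({φ₁, φ₂} :
      Set (MvPolynomial (Fin 3) k ≃ₐ[k] MvPolynomial (Fin 3) k)) = θ.range := by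
    have hset : ({φ₁, φ₂} : Set (MvPolynomial (Fin 3) k ≃ₐ[k] MvPolynomial (Fin 3) k))
        = ⇑θ '' {Equiv.swap 0 2, Equiv.swap 0 1} := by
      rw [Set.image_insert_eq, Set.image_singleton, hθ₁, hθ₂]
    rw [hset, ← MonoidHom.map_closure, perm3_gen, ← MonoidHom.range_eq_map]
  have hiso : Nonempty ((Subgroup.closure {φ₁, φ₂} :
      Subgroup (MvPolynomial (Fin 3) k ≃ₐ[k] MvPolynomial (Fin 3) k)) ≃*
      Equiv.Perm (Fin 3)) :=
    ⟨(MulEquiv.subgroupCongr hclosure).trans (MonoidHom.ofInjective hθinj).symm⟩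
  -- fixed generators
  have hy11 : φ₁ (y18_1 a b) = y18_1 a b := by
    simp only [y18_1, map_add, map_mul, algEquiv_C18, hφ₁0, hφ₁1, hφ₁2]
    rw [hCa]; ring
  have hy12 : φ₂ (y18_1 a b) = y18_1 a b := by
    simp only [y18_1, map_add, map_mul, algEquiv_C18, hφ₂0, hφ₂1, hφ₂2]
    rw [hCb]; ring
  have hy21 : φ₁ (y18_2 : MvPolynomial (Fin 3) k) = y18_2 := by
    simp only [y18_2, map_add, map_mul, map_pow, hφ₁0, hφ₁1]; ring
  have hy22 : φ₂ (y18_2 : MvPolynomial (Fin 3) k) = y18_2 := by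
    simp only [y18_2, map_add, map_mul, map_pow, hφ₂0, hφ₂1]; ring
  have hy31 : φ₁ (y18_3 : MvPolynomial (Fin 3) k) = y18_3 := by
    simp only [y18_3, map_add, map_sub, map_mul, map_pow, map_ofNat, hφ₁0, hφ₁1]; ring
  have hy32 : φ₂ (y18_3 : MvPolynomial (Fin 3) k) = y18_3 := by
    simp only [y18_3, map_add, map_sub, map_mul, map_pow, map_ofNat, hφ₂0, hφ₂1]; ring
  -- u-images of generators
  have hu1 : u (y18_1 a b) = X 0 + X 1 + X 2 := by
    simp only [hu, y18_1, AlgEquiv.trans_apply, Se18_symm_apply, Ie18_apply, map_add, map_sub,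
      map_mul, aeval_X, aeval_C, algebraMap_eq, Matrix.cons_val_zero, Matrix.cons_val_one,
      Matrix.head_cons, Matrix.cons_val_two, Matrix.tail_cons]
    ring
  have hu2 : u (y18_2 : MvPolynomial (Fin 3) k)
      = (X 0 - X 1) ^ 2 + (X 1 - X 2) ^ 2 + (X 0 - X 1) * (X 1 - X 2) := by
    simp only [hu, y18_2, AlgEquiv.trans_apply, Se18_symm_apply, Ie18_apply, map_add, map_sub,
      map_mul, map_pow, aeval_X, aeval_C, algebraMap_eq, Matrix.cons_val_zero,
      Matrix.cons_val_one, Matrix.head_cons, Matrix.cons_val_two, Matrix.tail_cons]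
  have hu3 : u (y18_3 : MvPolynomial (Fin 3) k)
      = 2 * (X 0 - X 1) ^ 3 + 3 * (X 0 - X 1) ^ 2 * (X 1 - X 2)
        - 3 * (X 0 - X 1) * (X 1 - X 2) ^ 2 - 2 * (X 1 - X 2) ^ 3 := by
    simp only [hu, y18_3, AlgEquiv.trans_apply, Se18_symm_apply, Ie18_apply, map_add, map_sub,
      map_mul, map_pow, map_ofNat, aeval_X, aeval_C, algebraMap_eq, Matrix.cons_val_zero,
      Matrix.cons_val_one, Matrix.head_cons, Matrix.cons_val_two, Matrix.tail_cons]
  -- the invariant algebra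
  have hinv : {f : MvPolynomial (Fin 3) k | ∀ ψ ∈ Subgroup.closure {φ₁, φ₂}, ψ f = f} =
      ↑(Algebra.adjoin k ({y18_1 a b, y18_2, y18_3} : Set (MvPolynomial (Fin 3) k))) := by
    ext f
    simp only [Set.mem_setOf_eq, SetLike.mem_coe]
    constructor
    · intro hf
      have h₁ : φ₁ f = f := hf φ₁ (Subgroup.subset_closure (by simp))
      have h₂ : φ₂ f = f := hf φ₂ (Subgroup.subset_closure (by simp))
      have hr₁ : rename (Equiv.swap 0 2) (u f) = u f := by
        have := DFunLike.congr_fun key₁ f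
        simp only [AlgEquiv.mul_apply, RH18_apply, h₁] at this
        exact this
      have hr₂ : rename (Equiv.swap 0 1) (u f) = u f := by
        have := DFunLike.congr_fun key₂ f
        simp only [AlgEquiv.mul_apply, RH18_apply, h₂] at this
        exact this
      have hsym : IsSymmetric (u f) := by
        intro e
        have he : e ∈ Subgroup.closure
            ({Equiv.swap 0 2, Equiv.swap 0 1} : Set (Equiv.Perm (Fin 3))) := by
          rw [perm3_gen]; trivial
        induction he using Subgroup.closure_induction with
        | mem x hx =>
          simp only [Set.mem_insert_iff, Set.mem_singleton_iff] at hx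
          rcases hx with rfl | rfl
          · exact hr₁
          · exact hr₂
        | one => simp
        | mul x y hx hy ihx ihy =>
          rw [show ⇑(x * y) = ⇑x ∘ ⇑y from rfl, ← rename_rename, ihy, ihx]
        | inv x hx ih =>
          conv_lhs => rw [← ih]
          rw [rename_rename, show ⇑x⁻¹ ∘ ⇑x = id from by
            funext t; simp, rename_id, AlgHom.id_apply]
      obtain ⟨q, hq⟩ := esymmAlgHom_surjective (σ := Fin 3) (R := k) (n := 3) (by simp)
        ⟨u f, (mem_symmetricSubalgebra _).mpr hsym⟩
      have hval := congrArg Subtype.val hq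
      rw [esymmAlgHom_apply] at hval
      have hmem : u f ∈ Algebra.adjoin k
          (Set.range (fun i : Fin 3 => esymm (Fin 3) k (↑i + 1))) := by
        rw [Algebra.adjoin_range_eq_range_aeval]
        exact ⟨q, hval⟩
      set A3 := Algebra.adjoin k
        ({u (y18_1 a b), u y18_2, u y18_3} : Set (MvPolynomial (Fin 3) k)) with hA3
      have me1 : esymm (Fin 3) k 1 ∈ A3 := by
        rw [esymm18_1, ← hu1]
        exact Algebra.subset_adjoin (by simp)
      have me2 : esymm (Fin 3) k 2 ∈ A3 := by
        have hid : esymm (Fin 3) k 2 = (3:k)⁻¹ • ((u (y18_1 a b)) ^ 2 - u y18_2) := by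
          rw [hu1, hu2, esymm18_2, Algebra.smul_def, algebraMap_eq]
          linear_combination (-(X 0 * X 1 + X 0 * X 2 + X 1 * X 2) :
            MvPolynomial (Fin 3) k) * C3_cancel (k := k)
        rw [hid]
        exact Subalgebra.smul_mem _ (sub_mem (Subalgebra.pow_mem _ (Algebra.subset_adjoin (by simp)) 2)
          (Algebra.subset_adjoin (by simp))) _
      have me3 : esymm (Fin 3) k 3 ∈ A3 := by
        have h27 : ((27 : MvPolynomial (Fin 3) k)) * C (27 : k)⁻¹ = 1 := by
          rw [← map_ofNat (C : k →+* MvPolynomial (Fin 3) k) 27, ← C_mul]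
          norm_num
        have hid : esymm (Fin 3) k 3 = (27:k)⁻¹ •
            (u y18_3 + (u (y18_1 a b)) ^ 3 - (3:k) • (u (y18_1 a b) * u y18_2)) := by
          rw [hu1, hu2, hu3, esymm18_3, Algebra.smul_def, Algebra.smul_def, algebraMap_eq,
            map_ofNat (C : k →+* MvPolynomial (Fin 3) k) 3]
          linear_combination (-(X 0 * X 1 * X 2) : MvPolynomial (Fin 3) k) * h27
        rw [hid]
        refine Subalgebra.smul_mem _ ?_ _
        refine sub_mem (add_mem (Algebra.subset_adjoin (by simp))
          (Subalgebra.pow_mem _ (Algebra.subset_adjoin (by simp)) 3)) ?_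
        exact Subalgebra.smul_mem _ (mul_mem (Algebra.subset_adjoin (by simp))
          (Algebra.subset_adjoin (by simp))) _
      have hsub : Set.range (fun i : Fin 3 => esymm (Fin 3) k (↑i + 1)) ⊆ ↑A3 := by
        rintro x ⟨i, rfl⟩
        fin_cases i
        · simpa using me1
        · simpa using me2
        · simpa using me3
      have hufA3 : u f ∈ A3 := Algebra.adjoin_le hsub hmem
      have himg : A3 = (Algebra.adjoin k
          ({y18_1 a b, y18_2, y18_3} : Set (MvPolynomial (Fin 3) k))).map u.toAlgHom := by
        rw [AlgHom.map_adjoin, Set.image_insert_eq, Set.image_insert_eq, Set.image_singleton]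
        rfl
      rw [himg] at hufA3
      obtain ⟨g, hg, hgu⟩ := Subalgebra.mem_map.mp hufA3
      have hgf : g = f := u.injective (by simpa using hgu)
      rwa [← hgf]
    · intro hf ψ hψ
      induction hψ using Subgroup.closure_induction with
      | mem x hx =>
        simp only [Set.mem_insert_iff, Set.mem_singleton_iff] at hx
        rcases hx with rfl | rfl
        · have hle : Algebra.adjoin k ({y18_1 a b, y18_2, y18_3} :
              Set (MvPolynomial (Fin 3) k)) ≤ AlgHom.equalizer x.toAlgHom (AlgHom.id k _) := by
            apply Algebra.adjoin_le
            intro z hz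
            simp only [Set.mem_insert_iff, Set.mem_singleton_iff] at hz
            rcases hz with rfl | rfl | rfl
            · exact hy11
            · exact hy21
            · exact hy31
          exact hle hf
        · have hle : Algebra.adjoin k ({y18_1 a b, y18_2, y18_3} :
              Set (MvPolynomial (Fin 3) k)) ≤ AlgHom.equalizer x.toAlgHom (AlgHom.id k _) := by
            apply Algebra.adjoin_le
            intro z hz
            simp only [Set.mem_insert_iff, Set.mem_singleton_iff] at hz
            rcases hz with rfl | rfl | rfl
            · exact hy12
            · exact hy22
            · exact hy32
          exact hle hf
      | one => simp
      | mul x y hx hy ihx ihy => rw [AlgEquiv.mul_apply, ihy, ihx]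
      | inv x hx ih =>
        conv_lhs => rw [← ih]
        exact x.symm_apply_apply f
  refine ⟨hg1, hg2, hg3, hg4, hiso, hinv, ?_, ?_, ?_⟩
  · simp only [br18, jacBracket, y18_1, y18_2, y18_3, pderiv_mul, pderiv_X, pderiv_ofNat18]
    <;> simp [pderiv_mul, pderiv_ofNat18] <;> ring
  · simp only [br18, jacBracket, y18_2, y18_3]
    simp [pderiv_mul, pderiv_ofNat18] <;> ring
  · simp only [br18, jacBracket, y18_1, y18_2, y18_3]
    simp [pderiv_mul, pderiv_ofNat18] <;> ring
end

section
/- Equip P = k[x₁,x₂,x₃] with the Poisson bracket {x₁,x₂} = 0, {x₂,x₃} = 2x₁x₂, {x₃,x₁} = x₁². Fix an integer l ≥ 2, a primitive l-th root of unity ξ ∈ k, and d ∈ k, and let φ be the graded Poisson automorphism with φ(x₁) = x₁, φ(x₂) = ξ·x₂, φ(x₃) = d·x₂ + x₃. Then G = ⟨φ⟩ is a finite group of order l, the invariant subalgebra P^G equals the k-subalgebra generated by y₁ = x₁, y₂ = d·x₂ + (1−ξ)·x₃, y₃ = x₂^l, and these generators satisfy {y₁,y₂} = (ξ−1)y₁²,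 {y₂,y₃} = 2l(ξ−1)y₁y₃, {y₃,y₁} = 0. -/
open MvPolynomial

section Aux

variable {k : Type*} [Field k] [CharZero k]

/-- The "triangular" substitution `x₂ ↦ dx₁ + (1-ξ)x₂`. -/
noncomputable def auxT (ξ d : k) : MvPolynomial (Fin 3) k →ₐ[k] MvPolynomial (Fin 3) k :=
  aeval ![X 0, X 1, C d * X 1 + C (1 - ξ) * X 2]

/-- Its inverse substitution. -/
noncomputable def auxT' (ξ d : k) : MvPolynomial (Fin 3) k →ₐ[k] MvPolynomial (Fin 3) k :=
  aeval ![X 0, X 1, C (1 - ξ)⁻¹ * (X 2 - C d * X 1)]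

/-- The diagonal substitution `x₂ ↦ ξ x₂`. -/
noncomputable def auxD (ξ : k) : MvPolynomial (Fin 3) k →ₐ[k] MvPolynomial (Fin 3) k :=
  aeval ![X 0, C ξ * X 1, X 2]

lemma auxT'_T (ξ d : k) (hne : (1 : k) - ξ ≠ 0) (p : MvPolynomial (Fin 3) k) :
    auxT' ξ d (auxT ξ d p) = p := by
  have hCC : (C (1 - ξ) : MvPolynomial (Fin 3) k) * C (1 - ξ)⁻¹ = 1 := by
    rw [← C_mul, mul_inv_cancel₀ hne, C_1]
  rw [C_sub, C_1] at hCC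
  have h : (auxT' ξ d).comp (auxT ξ d) = AlgHom.id k (MvPolynomial (Fin 3) k) := by
    apply MvPolynomial.algHom_ext
    intro i
    fin_cases i
    · show auxT' ξ d (auxT ξ d (X 0)) = X 0
      simp [auxT, auxT']
    · show auxT' ξ d (auxT ξ d (X 1)) = X 1
      simp [auxT, auxT']
    · show auxT' ξ d (auxT ξ d (X 2)) = X 2
      simp only [auxT, auxT', aeval_X, Matrix.cons_val_zero, Matrix.cons_val_one,
        Matrix.head_cons, Matrix.cons_val_two, Matrix.tail_cons, map_add, map_mul, map_sub,
        map_one, aeval_C, MvPolynomial.algebraMap_eq, C_sub, C_1]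
      linear_combination (X 2 - C d * X 1) * hCC
  exact DFunLike.congr_fun h p

lemma auxT_T' (ξ d : k) (hne : (1 : k) - ξ ≠ 0) (p : MvPolynomial (Fin 3) k) :
    auxT ξ d (auxT' ξ d p) = p := by
  have hCC : (C (1 - ξ) : MvPolynomial (Fin 3) k) * C (1 - ξ)⁻¹ = 1 := by
    rw [← C_mul, mul_inv_cancel₀ hne, C_1]
  rw [C_sub, C_1] at hCC
  have h : (auxT ξ d).comp (auxT' ξ d) = AlgHom.id k (MvPolynomial (Fin 3) k) := by
    apply MvPolynomial.algHom_ext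
    intro i
    fin_cases i
    · show auxT ξ d (auxT' ξ d (X 0)) = X 0
      simp [auxT, auxT']
    · show auxT ξ d (auxT' ξ d (X 1)) = X 1
      simp [auxT, auxT']
    · show auxT ξ d (auxT' ξ d (X 2)) = X 2
      simp only [auxT, auxT', aeval_X, Matrix.cons_val_zero, Matrix.cons_val_one,
        Matrix.head_cons, Matrix.cons_val_two, Matrix.tail_cons, map_add, map_mul, map_sub,
        map_one, aeval_C, MvPolynomial.algebraMap_eq, C_sub, C_1]
      linear_combination X 2 * hCC
  exact DFunLike.congr_fun h p

lemma auxD_coeff (ξ : k) (p : MvPolynomial (Fin 3) k) (m : Fin 3 →₀ ℕ) :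
    coeff m (auxD ξ p) = ξ ^ (m 1) * coeff m p := by
  have hmon : ∀ (u : Fin 3 →₀ ℕ) (c : k),
      auxD ξ (monomial u c) = monomial u (ξ ^ (u 1) * c) := by
    intro u c
    rw [auxD, aeval_monomial, Finsupp.prod_fintype _ _ (fun i => pow_zero _),
      Fin.prod_univ_three, monomial_eq, Finsupp.prod_fintype _ _ (fun i => pow_zero _),
      Fin.prod_univ_three, MvPolynomial.algebraMap_eq]
    simp only [Matrix.cons_val_zero, Matrix.cons_val_one, Matrix.head_cons,
      Matrix.cons_val_two, Matrix.tail_cons]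
    rw [mul_pow, ← C_pow, C_mul]
    ring
  induction p using MvPolynomial.induction_on' with
  | monomial u c =>
      rw [hmon, coeff_monomial, coeff_monomial]
      split
      · next h => subst h; ring
      · simp
  | add p q hp hq =>
      rw [map_add, coeff_add, coeff_add, hp, hq]
      ring

end Aux

/-- For the bracket `{x₁,x₂} = 0`, `{x₂,x₃} = 2x₁x₂`, `{x₃,x₁} = x₁²` and the graded Poisson
automorphism `φ : x₁ ↦ x₁, x₂ ↦ ξx₂, x₃ ↦ dx₂ + x₃` with `ξ` a primitive `l`-th root of
unity (`l ≥ 2`), the group `G = ⟨φ⟩` has order `l`, the invariant subalgebra `P^G` is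
generated by `y₁ = x₁`, `y₂ = dx₂ + (1−ξ)x₃`, `y₃ = x₂^l`, and `{y₁,y₂} = (ξ−1)y₁²`,
`{y₂,y₃} = 2l(ξ−1)y₁y₃`, `{y₃,y₁} = 0`. -/
theorem stmt_19 {k : Type*} [Field k] [IsAlgClosed k] [CharZero k]
    (l : ℕ) (hl : 2 ≤ l) (ξ : k) (hξ : ξ ^ l = 1 ∧ ∀ j, 1 ≤ j → j < l → ξ ^ j ≠ 1) (d : k)
    (φ : MvPolynomial (Fin 3) k ≃ₐ[k] MvPolynomial (Fin 3) k)
    (hφ0 : φ (X 0) = X 0)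
    (hφ1 : φ (X 1) = C ξ * X 1)
    (hφ2 : φ (X 2) = C d * X 1 + X 2)
    (hbr : ∀ f g, φ (jacBracket 0 (2 * X 0 * X 1) (X 0 ^ 2) f g) =
      jacBracket 0 (2 * X 0 * X 1) (X 0 ^ 2) (φ f) (φ g)) :
    Nat.card (Subgroup.zpowers φ) = l ∧
    {f : MvPolynomial (Fin 3) k | ∀ ψ ∈ Subgroup.zpowers φ, ψ f = f} =
      ↑(Algebra.adjoin k
          ({X 0, C d * X 1 + C (1 - ξ) * X 2, X 1 ^ l} : Set (MvPolynomial (Fin 3) k))) ∧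
    jacBracket 0 (2 * X 0 * X 1) (X 0 ^ 2) (X 0) (C d * X 1 + C (1 - ξ) * X 2) =
      C (ξ - 1) * X 0 ^ 2 ∧
    jacBracket 0 (2 * X 0 * X 1) (X 0 ^ 2) (C d * X 1 + C (1 - ξ) * X 2) (X 1 ^ l) =
      C (2 * (l : k) * (ξ - 1)) * (X 0 * X 1 ^ l) ∧
    jacBracket 0 (2 * X 0 * X 1) (X 0 ^ 2) (X 1 ^ l) (X 0 : MvPolynomial (Fin 3) k) = 0 := by
  have hξ1 : ξ ≠ 1 := fun h => hξ.2 1 le_rfl (by omega) (by simp [h])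
  have hne : (1 : k) - ξ ≠ 0 := sub_ne_zero.mpr (Ne.symm hξ1)
  have hC : ∀ c : k, φ (C c) = C c := by
    intro c; rw [← MvPolynomial.algebraMap_eq]; exact φ.commutes c
  have horderξ : orderOf ξ = l := by
    rw [orderOf_eq_iff (by omega)]
    exact ⟨hξ.1, fun m hm hm0 => hξ.2 m hm0 hm⟩
  -- powers of φ on the generators
  have hp0 : ∀ n : ℕ, (φ ^ n) (X 0) = X 0 := by
    intro n
    induction n with
    | zero => simp
    | succ n ih => rw [pow_succ', AlgEquiv.mul_apply, ih, hφ0]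
  have hp1 : ∀ n : ℕ, (φ ^ n) (X 1) = C (ξ ^ n) * X 1 := by
    intro n
    induction n with
    | zero => simp
    | succ n ih =>
        rw [pow_succ', AlgEquiv.mul_apply, ih, map_mul, hφ1, hC, ← mul_assoc, ← C_mul,
          ← pow_succ]
  have hp2 : ∀ n : ℕ, (φ ^ n) (X 2) = C (d * ∑ j ∈ Finset.range n, ξ ^ j) * X 1 + X 2 := by
    intro n
    induction n with
    | zero => simp
    | succ n ih =>
        rw [pow_succ', AlgEquiv.mul_apply, ih, map_add, map_mul, hφ1, hφ2, hC, geom_sum_succ]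
        simp only [C_mul, C_add, C_1]
        ring
  have hsum : ∑ j ∈ Finset.range l, ξ ^ j = 0 := by
    rw [geom_sum_eq hξ1, hξ.1]
    simp
  have hφl : φ ^ l = 1 := by
    have h : ((φ ^ l : _) : MvPolynomial (Fin 3) k ≃ₐ[k] MvPolynomial (Fin 3) k).toAlgHom =
        (AlgHom.id k (MvPolynomial (Fin 3) k)) := by
      apply MvPolynomial.algHom_ext
      intro i
      fin_cases i
      · simpa using hp0 l
      · show (φ ^ l) (X 1) = X 1
        rw [hp1 l, hξ.1]; simp
      · show (φ ^ l) (X 2) = X 2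
        rw [hp2 l, hsum]; simp
    refine AlgEquiv.ext fun p => ?_
    have := DFunLike.congr_fun h p
    simpa using this
  have horder : orderOf φ = l := by
    rw [orderOf_eq_iff (by omega)]
    refine ⟨hφl, fun m hm hm0 h1 => ?_⟩
    have := DFunLike.congr_fun (congrArg (fun e => (e : _ ≃ₐ[k] _)) h1)
      (X 1 : MvPolynomial (Fin 3) k)
    rw [hp1 m] at this
    simp only [AlgEquiv.one_apply] at this
    have hc := congrArg (coeff (Finsupp.single 1 1)) this
    rw [coeff_C_mul, coeff_X] at hc
    exact hξ.2 m hm0 hm (by simpa using hc)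
  refine ⟨by rw [Nat.card_zpowers, horder], ?_, ?_, ?_, ?_⟩
  · -- the invariant subalgebra
    -- φ ∘ T = T ∘ D
    have hφτ : ∀ p : MvPolynomial (Fin 3) k, φ (auxT ξ d p) = auxT ξ d (auxD ξ p) := by
      have h : (φ.toAlgHom).comp (auxT ξ d) = (auxT ξ d).comp (auxD ξ) := by
        apply MvPolynomial.algHom_ext
        intro i
        fin_cases i
        · show φ (auxT ξ d (X 0)) = auxT ξ d (auxD ξ (X 0))
          simp [auxT, auxD, hφ0]
        · show φ (auxT ξ d (X 1)) = auxT ξ d (auxD ξ (X 1))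
          simp only [auxT, auxD, aeval_X, Matrix.cons_val_zero, Matrix.cons_val_one,
            Matrix.head_cons, map_mul, aeval_C, MvPolynomial.algebraMap_eq, hφ1]
        · show φ (auxT ξ d (X 2)) = auxT ξ d (auxD ξ (X 2))
          simp only [auxT, auxD, aeval_X, Matrix.cons_val_zero, Matrix.cons_val_one,
            Matrix.head_cons, Matrix.cons_val_two, Matrix.tail_cons, map_add, map_mul,
            aeval_C, MvPolynomial.algebraMap_eq, hφ1, hφ2, hC, map_sub, map_one, C_sub, C_1]
          ring
      intro p; exact DFunLike.congr_fun h p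
    -- generators are fixed by φ
    have hfixgen : ∀ x ∈ ({X 0, C d * X 1 + C (1 - ξ) * X 2, X 1 ^ l} :
        Set (MvPolynomial (Fin 3) k)), φ x = x := by
      intro x hx
      rcases hx with rfl | rfl | rfl
      · exact hφ0
      · rw [map_add, map_mul, map_mul, hC, hC, hφ1, hφ2]
        simp only [C_sub, C_1]
        ring
      · rw [map_pow, hφ1, mul_pow, ← C_pow, hξ.1, C_1, one_mul]
    have hback : ∀ f ∈ Algebra.adjoin k ({X 0, C d * X 1 + C (1 - ξ) * X 2, X 1 ^ l} :
        Set (MvPolynomial (Fin 3) k)), φ f = f := by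
      intro f hf
      have hle : Algebra.adjoin k ({X 0, C d * X 1 + C (1 - ξ) * X 2, X 1 ^ l} :
          Set (MvPolynomial (Fin 3) k)) ≤
          AlgHom.equalizer φ.toAlgHom (AlgHom.id k (MvPolynomial (Fin 3) k)) :=
        Algebra.adjoin_le fun x hx => hfixgen x hx
      exact hle hf
    -- divisibility ⇒ membership in adjoin {X0, X2, X1^l}
    have hB : ∀ g : MvPolynomial (Fin 3) k, (∀ m ∈ g.support, l ∣ m 1) →
        g ∈ Algebra.adjoin k ({X 0, X 2, X 1 ^ l} : Set (MvPolynomial (Fin 3) k)) := by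
      intro g hg
      have hsum2 : (∑ m ∈ g.support, monomial m (coeff m g)) ∈
          Algebra.adjoin k ({X 0, X 2, X 1 ^ l} : Set (MvPolynomial (Fin 3) k)) := by
        apply Subalgebra.sum_mem
        intro m hm
        obtain ⟨b, hb⟩ := hg m hm
        have hmono : (monomial m (coeff m g) : MvPolynomial (Fin 3) k) =
            C (coeff m g) * (X 0 ^ m 0 * X 1 ^ m 1 * X 2 ^ m 2) := by
          rw [monomial_eq, Finsupp.prod_fintype _ _ (fun i => pow_zero _), Fin.prod_univ_three]
        rw [hmono, hb, pow_mul]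
        refine mul_mem ?_ (mul_mem (mul_mem (pow_mem ?_ _) (pow_mem ?_ _)) (pow_mem ?_ _))
        · rw [← MvPolynomial.algebraMap_eq]; exact Subalgebra.algebraMap_mem _ _
        · exact Algebra.subset_adjoin (by simp)
        · exact Algebra.subset_adjoin (by simp)
        · exact Algebra.subset_adjoin (by simp)
      rwa [← g.as_sum] at hsum2
    -- forward inclusion
    have hfwd : ∀ f : MvPolynomial (Fin 3) k, φ f = f →
        f ∈ Algebra.adjoin k ({X 0, C d * X 1 + C (1 - ξ) * X 2, X 1 ^ l} :
          Set (MvPolynomial (Fin 3) k)) := by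
      intro f hf
      have hfg : auxT ξ d (auxT' ξ d f) = f := auxT_T' ξ d hne f
      have hDg : auxD ξ (auxT' ξ d f) = auxT' ξ d f := by
        have h1 : auxT ξ d (auxD ξ (auxT' ξ d f)) = auxT ξ d (auxT' ξ d f) := by
          rw [← hφτ, hfg, hf]
        have h2 := congrArg (auxT' ξ d) h1
        rwa [auxT'_T ξ d hne, auxT'_T ξ d hne] at h2
      have hgmem : auxT' ξ d f ∈ Algebra.adjoin k ({X 0, X 2, X 1 ^ l} :
          Set (MvPolynomial (Fin 3) k)) := by
        apply hB
        intro m hm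
        have hc := auxD_coeff ξ (auxT' ξ d f) m
        rw [hDg] at hc
        have hne0 : coeff m (auxT' ξ d f) ≠ 0 := mem_support_iff.mp hm
        have hone : ξ ^ (m 1) = 1 := by
          by_contra hcon
          apply hne0
          have h0 : (ξ ^ m 1 - 1) * coeff m (auxT' ξ d f) = 0 := by linear_combination -hc
          rcases mul_eq_zero.mp h0 with h | h
          · exact absurd (sub_eq_zero.mp h) hcon
          · exact h
        rw [← horderξ]
        exact orderOf_dvd_of_pow_eq_one hone
      have hmem : f ∈ (Algebra.adjoin k ({X 0, X 2, X 1 ^ l} :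
          Set (MvPolynomial (Fin 3) k))).map (auxT ξ d) := ⟨auxT' ξ d f, hgmem, hfg⟩
      rw [AlgHom.map_adjoin] at hmem
      have himg : (auxT ξ d) '' ({X 0, X 2, X 1 ^ l} : Set (MvPolynomial (Fin 3) k)) =
          {X 0, C d * X 1 + C (1 - ξ) * X 2, X 1 ^ l} := by
        rw [Set.image_insert_eq, Set.image_insert_eq, Set.image_singleton, map_pow]
        simp [auxT]
      rwa [himg] at hmem
    ext f
    simp only [Set.mem_setOf_eq, SetLike.mem_coe]
    constructor
    · intro h
      exact hfwd f (h φ (Subgroup.mem_zpowers φ))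
    · intro hf ψ hψ
      have hfix : φ f = f := hback f hf
      have hfixn : ∀ m : ℕ, (φ ^ m) f = f := by
        intro m
        induction m with
        | zero => simp
        | succ m ih => rw [pow_succ, AlgEquiv.mul_apply, hfix, ih]
      obtain ⟨n, rfl⟩ := Subgroup.mem_zpowers_iff.mp hψ
      obtain ⟨m, rfl | rfl⟩ := n.eq_nat_or_neg
      · rw [zpow_natCast]; exact hfixn m
      · rw [zpow_neg, zpow_natCast]
        have h1 : (φ ^ m)⁻¹ ((φ ^ m) f) = f := by
          rw [← AlgEquiv.mul_apply, inv_mul_cancel]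
          simp
        rwa [hfixn m] at h1
  · simp [jacBracket, pderiv_X, C_sub]
  · have h1 : (pderiv (1 : Fin 3)) ((X 1 : MvPolynomial (Fin 3) k) ^ l) =
        C (l : k) * X 1 ^ (l - 1) := by
      rw [Derivation.leibniz_pow]
      simp [pderiv_X]
    have h2 : (X 1 : MvPolynomial (Fin 3) k) ^ (l - 1) * X 1 = X 1 ^ l := by
      rw [← pow_succ]; congr 1; omega
    simp [jacBracket, pderiv_X, h1, C_sub, C_mul]
    rw [← h2, show ((2 : MvPolynomial (Fin 3) k)) = C 2 from (map_ofNat C 2).symm]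
    ring
  · simp [jacBracket, pderiv_X]
end
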